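/- Let N ≥ 2 be an integer, t₀ ≥ 1 and β ≥ 0. Then ∂_tΦ_β(x,t) = −β Φ_{β+1}(x,t) for all (x,t) ∈ ℝ^N × [0,∞), where Φ_β and Φ_{β+1} are the members of the family Φ_γ with parameters γ = β and γ = β+1 respectively. -/

import Mathlib

open MeasureTheory Real

/-- Kummer's confluent hypergeometric function `M(a,c;z) = ∑ (a)_n/(c)_n zⁿ/n!`. -/
noncomputable def kummerM (a c z : ℝ) : ℝ :=
  ∑' n : ℕ, ((ascPochhammer ℝ n).eval a / (ascPochhammer ℝ n).eval c) * z ^ n / (n.factorial : ℝ)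

/-- The weight function
`Φ_γ(x,t) = (t₀+t)^{-γ} exp(-|x|²/(4(t₀+t))) M(N/2-γ, N/2; |x|²/(4(t₀+t)))`. -/
noncomputable def Phi (N : ℕ) (t₀ γ : ℝ) (x : EuclideanSpace ℝ (Fin N)) (t : ℝ) : ℝ :=
  (t₀ + t) ^ (-γ) * Real.exp (-‖x‖ ^ 2 / (4 * (t₀ + t))) *
    kummerM ((N : ℝ) / 2 - γ) ((N : ℝ) / 2) (‖x‖ ^ 2 / (4 * (t₀ + t)))

noncomputable def kcoef (a c : ℝ) (n : ℕ) : ℝ :=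
  (ascPochhammer ℝ n).eval a / (ascPochhammer ℝ n).eval c / (n.factorial : ℝ)

lemma kummerM_eq_tsum (a c z : ℝ) : kummerM a c z = ∑' n : ℕ, kcoef a c n * z ^ n :=
  tsum_congr fun n => by rw [kcoef]; ring

lemma kcoef_zero (a c : ℝ) : kcoef a c 0 = 1 := by simp [kcoef]

lemma kcoef_succ (a c : ℝ) (hc : 0 < c) (n : ℕ) :
    kcoef a c (n + 1) = kcoef a c n * ((a + n) / ((c + n) * (n + 1))) := by
  have h1 : (ascPochhammer ℝ n).eval c ≠ 0 := (ascPochhammer_pos n c hc).ne'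
  have h2 : c + (n : ℝ) ≠ 0 := by positivity
  have h3 : ((n.factorial : ℝ)) ≠ 0 := by positivity
  have h4 : ((n : ℝ) + 1) ≠ 0 := by positivity
  rw [kcoef, kcoef, ascPochhammer_succ_eval, ascPochhammer_succ_eval, Nat.factorial_succ]
  push_cast
  field_simp

lemma summable_weight (a c : ℝ) (hc : 1 ≤ c) (z : ℝ) (hz : 0 ≤ z) :
    Summable (fun n : ℕ => ((n : ℝ) + 1) * (|kcoef a c n| * z ^ n)) := by
  have hc0 : 0 < c := lt_of_lt_of_le one_pos hc
  apply summable_of_ratio_norm_eventually_le (r := 1/2) (by norm_num)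
  filter_upwards [Filter.eventually_ge_atTop ⌈|a|⌉₊, Filter.eventually_ge_atTop ⌈8*z⌉₊]
    with n hn1 hn2
  have hna : |a| ≤ (n : ℝ) := Nat.ceil_le.mp hn1
  have hnz : 8 * z ≤ (n : ℝ) := Nat.ceil_le.mp hn2
  have hn0 : (0:ℝ) ≤ (n:ℝ) := Nat.cast_nonneg n
  have hD : (0 : ℝ) < (c + n) * ((n : ℝ) + 1) := by positivity
  have habs : |a + (n : ℝ)| ≤ |a| + n := by
    calc |a + (n : ℝ)| ≤ |a| + |(n : ℝ)| := abs_add_le _ _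
    _ = |a| + n := by rw [abs_of_nonneg hn0]
  have keydiv : ((n : ℝ) + 2) * (|a + n| / ((c + n) * ((n : ℝ) + 1))) * z
      ≤ (1 / 2) * ((n : ℝ) + 1) := by
    rw [show ((n:ℝ)+2) * (|a + n| / ((c + n) * ((n:ℝ)+1))) * z
        = ((n:ℝ)+2) * |a + n| * z / ((c + n) * ((n:ℝ)+1)) from by ring, div_le_iff₀ hD]
    nlinarith [mul_le_mul_of_nonneg_left habs hz, mul_le_mul_of_nonneg_left hna hz,
      mul_le_mul_of_nonneg_left hnz hn0, mul_nonneg hz hn0, abs_nonneg (a + (n:ℝ)),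
      mul_le_mul_of_nonneg_left hnz hz]
  have hx : (0:ℝ) ≤ |kcoef a c n| * z ^ n := by positivity
  have e1 : ((↑(n+1) : ℝ) + 1) * (|kcoef a c (n+1)| * z ^ (n+1))
      = (|kcoef a c n| * z ^ n) * (((n:ℝ)+2) * (|a + n| / ((c + n) * ((n:ℝ)+1))) * z) := by
    rw [kcoef_succ a c hc0 n, abs_mul, abs_div, abs_of_pos hD]
    push_cast
    ring
  have hA : (0:ℝ) ≤ ((↑(n+1) : ℝ) + 1) * (|kcoef a c (n+1)| * z ^ (n+1)) :=
    mul_nonneg (by positivity) (mul_nonneg (abs_nonneg _) (pow_nonneg hz _))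
  have hB : (0:ℝ) ≤ ((n:ℝ) + 1) * (|kcoef a c n| * z ^ n) :=
    mul_nonneg (by positivity) (mul_nonneg (abs_nonneg _) (pow_nonneg hz _))
  rw [Real.norm_of_nonneg hA, Real.norm_of_nonneg hB, e1]
  calc (|kcoef a c n| * z ^ n) * (((n:ℝ)+2) * (|a + n| / ((c + n) * ((n:ℝ)+1))) * z)
      ≤ (|kcoef a c n| * z ^ n) * ((1/2) * ((n:ℝ)+1)) :=
        mul_le_mul_of_nonneg_left keydiv hx
    _ = 1 / 2 * (((n:ℝ) + 1) * (|kcoef a c n| * z ^ n)) := by ring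

lemma summable_abs_coef (a c : ℝ) (hc : 1 ≤ c) (z : ℝ) (hz : 0 ≤ z) :
    Summable (fun n : ℕ => |kcoef a c n| * z ^ n) := by
  refine (summable_weight a c hc z hz).of_nonneg_of_le
    (fun n => mul_nonneg (abs_nonneg _) (pow_nonneg hz _)) (fun n => ?_)
  exact le_mul_of_one_le_left (mul_nonneg (abs_nonneg _) (pow_nonneg hz _)) (by linarith [(Nat.cast_nonneg n : (0:ℝ) ≤ (n:ℝ))])

lemma summable_coef (a c : ℝ) (hc : 1 ≤ c) (z : ℝ) (hz : 0 ≤ z) :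
    Summable (fun n : ℕ => kcoef a c n * z ^ n) := by
  refine Summable.of_abs ?_
  refine (summable_abs_coef a c hc z hz).congr fun n => ?_
  rw [abs_mul, abs_pow, abs_of_nonneg hz]

lemma summable_n_coef (a c : ℝ) (hc : 1 ≤ c) (z : ℝ) (hz : 0 ≤ z) :
    Summable (fun n : ℕ => (n : ℝ) * (kcoef a c n * z ^ n)) := by
  refine Summable.of_abs ?_
  refine (summable_weight a c hc z hz).of_nonneg_of_le (fun n => abs_nonneg _) (fun n => ?_)
  rw [abs_mul, abs_mul, abs_pow, abs_of_nonneg hz, abs_of_nonneg (Nat.cast_nonneg n : (0:ℝ) ≤ n)]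
  have h1 : (0:ℝ) ≤ |kcoef a c n| * z ^ n := mul_nonneg (abs_nonneg _) (pow_nonneg hz _)
  nlinarith [h1]

lemma asc_eval_succ_left (n : ℕ) (t : ℝ) :
    (ascPochhammer ℝ (n + 1)).eval t = t * (ascPochhammer ℝ n).eval (t + 1) := by
  rw [ascPochhammer_succ_left]
  simp [Polynomial.eval_comp]

/-- The contiguous relation `-(c-a) M(a-1) = -((c-a)+n+1) (a)_{n+1}-coef + (a)_n-coef`. -/
lemma kcoef_identity (a c : ℝ) (hc : 0 < c) (n : ℕ) :
    -(c - a) * kcoef (a - 1) c (n + 1)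
      = kcoef a c (n + 1) * (-((c - a) + ((n : ℝ) + 1))) + kcoef a c n := by
  have h1 : (ascPochhammer ℝ n).eval c ≠ 0 := (ascPochhammer_pos n c hc).ne'
  have h2 : c + (n : ℝ) ≠ 0 := by positivity
  have h3 : ((n.factorial : ℝ)) ≠ 0 := by positivity
  have h4 : ((n : ℝ) + 1) ≠ 0 := by positivity
  have hL : (ascPochhammer ℝ (n+1)).eval (a - 1) = (a - 1) * (ascPochhammer ℝ n).eval a := by
    rw [asc_eval_succ_left]
    norm_num
  rw [kcoef, kcoef, kcoef, hL, ascPochhammer_succ_eval, ascPochhammer_succ_eval,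
    Nat.factorial_succ]
  push_cast
  field_simp
  ring

lemma hasDerivAt_term (β t₀ A k : ℝ) (n : ℕ) (s : ℝ) (hs : 0 < t₀ + s) :
    HasDerivAt
      (fun r => (t₀ + r) ^ (-β) * Real.exp (-(A / (4 * (t₀ + r)))) *
        (k * (A / (4 * (t₀ + r))) ^ n))
      ((t₀ + s) ^ (-β - 1) * Real.exp (-(A / (4 * (t₀ + s)))) *
        (k * (-(β + (n : ℝ)) * (A / (4 * (t₀ + s))) ^ n + (A / (4 * (t₀ + s))) ^ (n + 1)))) s := by
  have hτ : HasDerivAt (fun r : ℝ => t₀ + r) 1 s := by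
    simpa using (hasDerivAt_id s).const_add t₀
  have h4 : HasDerivAt (fun r : ℝ => 4 * (t₀ + r)) (4 * 1) s := hτ.const_mul 4
  have hne : 4 * (t₀ + s) ≠ 0 := by positivity
  have hz : HasDerivAt (fun r => A / (4 * (t₀ + r)))
      ((0 * (4 * (t₀ + s)) - A * (4 * 1)) / (4 * (t₀ + s)) ^ 2) s :=
    (hasDerivAt_const s A).div h4 hne
  have hz' : (0 * (4 * (t₀ + s)) - A * (4 * 1)) / (4 * (t₀ + s)) ^ 2
      = -(A / (4 * (t₀ + s)) / (t₀ + s)) := by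
    field_simp
    ring
  rw [hz'] at hz
  have hexp : HasDerivAt (fun r => Real.exp (-(A / (4 * (t₀ + r)))))
      (Real.exp (-(A / (4 * (t₀ + s)))) * -(-(A / (4 * (t₀ + s)) / (t₀ + s)))) s := hz.neg.exp
  have hp : HasDerivAt (fun r : ℝ => (t₀ + r) ^ (-β))
      (1 * (-β) * (t₀ + s) ^ (-β - 1)) s := hτ.rpow_const (Or.inl hs.ne')
  have hpow : HasDerivAt (fun r => (A / (4 * (t₀ + r))) ^ n)
      ((n : ℝ) * (A / (4 * (t₀ + s))) ^ (n - 1) * -(A / (4 * (t₀ + s)) / (t₀ + s))) s :=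
    hz.pow n
  have hk := hpow.const_mul k
  have htot := (hp.mul hexp).mul hk
  refine htot.congr_deriv ?_
  symm
  simp only [Pi.mul_apply]
  have hsplit : (t₀ + s) ^ (-β) = (t₀ + s) ^ (-β - 1) * (t₀ + s) := by
    rw [← Real.rpow_add_one hs.ne' (-β - 1)]
    norm_num
  rw [hsplit]
  have hTne : t₀ + s ≠ 0 := hs.ne'
  generalize Real.exp (-(A / (4 * (t₀ + s)))) = E
  generalize A / (4 * (t₀ + s)) = w
  cases n with
  | zero => field_simp; ring
  | succ m =>
    simp only [Nat.succ_sub_one]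
    field_simp
    ring

lemma tsum_inner (a c β : ℝ) (hc : 1 ≤ c) (hca : c - a = β) (z : ℝ) (hz : 0 ≤ z) :
    ∑' n : ℕ, kcoef a c n * (-(β + (n : ℝ)) * z ^ n + z ^ (n + 1))
      = -β * ∑' n : ℕ, kcoef (a - 1) c n * z ^ n := by
  subst hca
  have hc0 : (0:ℝ) < c := lt_of_lt_of_le one_pos hc
  set F : ℕ → ℝ := fun n => -(c - a) * (kcoef (a - 1) c n * z ^ n) with hFdef
  set G : ℕ → ℝ := fun n => kcoef a c n * (-((c - a) + (n : ℝ)) * z ^ n) with hGdef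
  set H : ℕ → ℝ := fun n => kcoef a c n * z ^ (n + 1) with hHdef
  have hco := summable_coef a c hc z hz
  have hG : Summable G := by
    refine (((hco.mul_left (-(c - a))).add ((summable_n_coef a c hc z hz).mul_left
      (-1))).congr fun n => ?_)
    simp only [hGdef]
    ring
  have hH : Summable H := by
    refine ((hco.mul_left z).congr fun n => ?_)
    simp only [hHdef]
    ring
  have hF : Summable F := (summable_coef (a - 1) c hc z hz).mul_left _
  have key : ∀ n : ℕ, F (n + 1) = G (n + 1) + H n := by
    intro n
    have hid := kcoef_identity a c hc0 n
    simp only [hFdef, hGdef, hHdef]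
    push_cast
    linear_combination z ^ (n + 1) * hid
  have hF1 : Summable (fun n => F (n + 1)) := (summable_nat_add_iff 1).mpr hF
  have hG1 : Summable (fun n => G (n + 1)) := (summable_nat_add_iff 1).mpr hG
  have eqLHS : ∑' n : ℕ, kcoef a c n * (-((c - a) + (n : ℝ)) * z ^ n + z ^ (n + 1))
      = (∑' n, G n) + ∑' n, H n := by
    rw [← hG.tsum_add hH]
    refine tsum_congr fun n => ?_
    simp only [hGdef, hHdef]
    ring
  have eqH : ∑' n, H n = (∑' n, F (n + 1)) - ∑' n, G (n + 1) := by
    rw [← hF1.tsum_sub hG1]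
    exact tsum_congr fun n => by rw [key n]; ring
  have eF := hF.tsum_eq_zero_add
  have eG := hG.tsum_eq_zero_add
  have hF0 : F 0 = -(c - a) := by simp [hFdef, kcoef_zero]
  have hG0 : G 0 = -(c - a) := by simp [hGdef, kcoef_zero]
  have eqF : ∑' n, F n = -(c - a) * ∑' n : ℕ, kcoef (a - 1) c n * z ^ n := by
    rw [hFdef, tsum_mul_left]
  rw [eqLHS, eqH, ← eqF]
  rw [hF0] at eF
  rw [hG0] at eG
  linarith

lemma main_hasDerivAt (a c t₀ β A : ℝ) (hc : 1 ≤ c) (hca : c - a = β) (hβ : 0 ≤ β)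
    (hA : 0 ≤ A) (ht₀ : 1 ≤ t₀) (t : ℝ) (ht : 0 ≤ t) :
    HasDerivAt
      (fun s => ∑' n : ℕ, (t₀ + s) ^ (-β) * Real.exp (-(A / (4 * (t₀ + s)))) *
        (kcoef a c n * (A / (4 * (t₀ + s))) ^ n))
      (-β * ((t₀ + t) ^ (-(β + 1)) * Real.exp (-(A / (4 * (t₀ + t)))) *
        ∑' n : ℕ, kcoef (a - 1) c n * (A / (4 * (t₀ + t))) ^ n)) t := by
  have hτ : (0:ℝ) < t₀ + t := by linarith
  have hS : ∀ s ∈ Set.Ioo (t - 1/2) (t + 1), (1:ℝ)/2 ≤ t₀ + s := by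
    rintro s ⟨h1, h2⟩
    linarith
  set u : ℕ → ℝ := fun n => (2:ℝ) ^ (β + 1) *
    (|kcoef a c n| * ((β + (n:ℝ)) * (A/2) ^ n + (A/2) * (A/2) ^ n)) with hudef
  have hZ0 : (0:ℝ) ≤ A/2 := by linarith
  have habs := summable_abs_coef a c hc (A/2) hZ0
  have hu : Summable u := by
    refine Summable.mul_left _ ?_
    have h3 : Summable (fun n : ℕ => (n : ℝ) * (|kcoef a c n| * (A/2) ^ n)) := by
      refine (summable_weight a c hc (A/2) hZ0).of_nonneg_of_le (fun n => ?_) (fun n => ?_)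
      · exact mul_nonneg (Nat.cast_nonneg n) (mul_nonneg (abs_nonneg _) (pow_nonneg hZ0 _))
      · have h4 : (0:ℝ) ≤ |kcoef a c n| * (A/2) ^ n :=
          mul_nonneg (abs_nonneg _) (pow_nonneg hZ0 _)
        nlinarith
    refine (((habs.mul_left β).add h3).add (habs.mul_left (A/2))).congr fun n => ?_
    ring
  have hg : ∀ (n : ℕ), ∀ s ∈ Set.Ioo (t - 1/2) (t + 1),
      HasDerivAt (fun r => (t₀ + r) ^ (-β) * Real.exp (-(A / (4 * (t₀ + r)))) *
          (kcoef a c n * (A / (4 * (t₀ + r))) ^ n))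
        ((t₀ + s) ^ (-β - 1) * Real.exp (-(A / (4 * (t₀ + s)))) *
          (kcoef a c n * (-(β + (n : ℝ)) * (A / (4 * (t₀ + s))) ^ n
            + (A / (4 * (t₀ + s))) ^ (n + 1)))) s := by
    intro n s hs
    exact hasDerivAt_term β t₀ A (kcoef a c n) n s (by have := hS s hs; linarith)
  have hbound : ∀ (n : ℕ), ∀ s ∈ Set.Ioo (t - 1/2) (t + 1),
      ‖(t₀ + s) ^ (-β - 1) * Real.exp (-(A / (4 * (t₀ + s)))) *
          (kcoef a c n * (-(β + (n : ℝ)) * (A / (4 * (t₀ + s))) ^ n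
            + (A / (4 * (t₀ + s))) ^ (n + 1)))‖ ≤ u n := by
    intro n s hs
    have h12 : (1:ℝ)/2 ≤ t₀ + s := hS s hs
    have hpos : (0:ℝ) < t₀ + s := by linarith
    set z : ℝ := A / (4 * (t₀ + s)) with hzdef
    have hz0 : 0 ≤ z := by positivity
    have hzZ : z ≤ A/2 := by
      rw [hzdef]
      rw [div_le_div_iff₀ (by positivity) (by norm_num)]
      nlinarith
    have hP : (0:ℝ) < (t₀ + s) ^ (-β - 1) := Real.rpow_pos_of_pos hpos _
    have hPle : (t₀ + s) ^ (-β - 1) ≤ (2:ℝ) ^ (β + 1) := by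
      have h1 : (t₀ + s) ^ (-β - 1) ≤ ((1:ℝ)/2) ^ (-β - 1) :=
        Real.rpow_le_rpow_of_nonpos (by norm_num) h12 (by linarith)
      have h2 : ((1:ℝ)/2) ^ (-β - 1) = (2:ℝ) ^ (β + 1) := by
        rw [one_div, Real.inv_rpow (by norm_num : (0:ℝ) ≤ 2),
          ← Real.rpow_neg (by norm_num : (0:ℝ) ≤ 2), show -(-β - 1) = β + 1 from by ring]
      linarith
    have hE : Real.exp (-z) ≤ 1 := Real.exp_le_one_iff.mpr (by linarith)
    have hQ : |kcoef a c n * (-(β + (n : ℝ)) * z ^ n + z ^ (n + 1))|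
        ≤ |kcoef a c n| * ((β + (n:ℝ)) * (A/2) ^ n + (A/2) * (A/2) ^ n) := by
      rw [abs_mul]
      refine mul_le_mul_of_nonneg_left ?_ (abs_nonneg _)
      have hbn : (0:ℝ) ≤ β + n := add_nonneg hβ (Nat.cast_nonneg n)
      calc |(-(β + (n : ℝ)) * z ^ n + z ^ (n + 1))|
          ≤ |(-(β + (n : ℝ)) * z ^ n)| + |z ^ (n + 1)| := abs_add_le _ _
        _ = (β + (n:ℝ)) * z ^ n + z ^ (n + 1) := by
            rw [abs_mul, abs_neg, abs_of_nonneg hbn, abs_of_nonneg (pow_nonneg hz0 _),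
              abs_of_nonneg (pow_nonneg hz0 _)]
        _ ≤ (β + (n:ℝ)) * (A/2) ^ n + (A/2) * (A/2) ^ n := by
            rw [show (A/2) * (A/2)^n = (A/2)^(n+1) from (pow_succ' _ _).symm]
            gcongr
    rw [norm_eq_abs, abs_mul, abs_mul, abs_of_pos hP, abs_of_pos (Real.exp_pos _)]
    calc (t₀ + s) ^ (-β - 1) * Real.exp (-z) *
          |kcoef a c n * (-(β + (n : ℝ)) * z ^ n + z ^ (n + 1))|
        ≤ (2:ℝ) ^ (β + 1) * 1 *
          (|kcoef a c n| * ((β + (n:ℝ)) * (A/2) ^ n + (A/2) * (A/2) ^ n)) := by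
          gcongr
      _ = u n := by rw [hudef]; ring
  have hmem : t ∈ Set.Ioo (t - 1/2) (t + 1) := by constructor <;> linarith
  have hg0 : Summable (fun n : ℕ => (t₀ + t) ^ (-β) * Real.exp (-(A / (4 * (t₀ + t)))) *
      (kcoef a c n * (A / (4 * (t₀ + t))) ^ n)) := by
    exact (summable_coef a c hc _ (by positivity)).mul_left _
  have key := hasDerivAt_tsum_of_isPreconnected hu isOpen_Ioo
    ((convex_Ioo _ _).isPreconnected) hg hbound hmem hg0 hmem
  refine key.congr_deriv ?_
  symm
  rw [tsum_mul_left, tsum_inner a c β hc hca _ (by positivity : (0:ℝ) ≤ A / (4 * (t₀ + t)))]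
  rw [show -(β+1) = -β - 1 from by ring]
  ring

/-- `∂_t Φ_β(x,t) = -β Φ_{β+1}(x,t)` on `ℝ^N × [0,∞)`. -/
theorem deriv_Phi_eq_neg_mul_Phi_succ (N : ℕ) (hN : 2 ≤ N) (t₀ β : ℝ) (ht₀ : 1 ≤ t₀)
    (hβ : 0 ≤ β) (x : EuclideanSpace ℝ (Fin N)) (t : ℝ) (ht : 0 ≤ t) :
    deriv (fun s => Phi N t₀ β x s) t = -β * Phi N t₀ (β + 1) x t := by
  have hc1 : (1:ℝ) ≤ (N:ℝ)/2 := by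
    have h2 : (2:ℝ) ≤ (N:ℝ) := by exact_mod_cast hN
    linarith
  have hm := main_hasDerivAt ((N:ℝ)/2 - β) ((N:ℝ)/2) t₀ β (‖x‖^2) hc1 (by ring) hβ
    (by positivity) ht₀ t ht
  have hfun : (fun s => Phi N t₀ β x s)
      = (fun s => ∑' n : ℕ, (t₀ + s) ^ (-β) * Real.exp (-(‖x‖^2 / (4 * (t₀ + s)))) *
        (kcoef ((N:ℝ)/2 - β) ((N:ℝ)/2) n * (‖x‖^2 / (4 * (t₀ + s))) ^ n)) := by
    funext s
    simp only [Phi]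
    rw [kummerM_eq_tsum, ← tsum_mul_left]
    exact tsum_congr fun n => by rw [neg_div]
  rw [hfun, hm.deriv]
  simp only [Phi]
  rw [kummerM_eq_tsum, neg_div,
    show (N:ℝ)/2 - β - 1 = (N:ℝ)/2 - (β+1) from by ring]
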